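/- For every weakly continuous operator T on M(Ω) with associated bounded transition kernel k, the positive part T⁺ of T taken in the Banach lattice L(M(Ω)) is again weakly continuous and its associated kernel is the pointwise positive part k₊, i.e., (T⁺μ)(A) = ∫ k₊(x,A) dμ(x). Consequently the weakly continuous operators form a vector sublattice of L(M(Ω)). -/

import Mathlib

open MeasureTheory Topology Filter
open scoped NNReal ENNReal BoundedContinuousFunction

noncomputable def sInt {Ω : Type*} [MeasurableSpace Ω] (μ : SignedMeasure Ω) (f : Ω → ℝ) : ℝ :=
  (∫ x, f x ∂μ.toJordanDecomposition.posPart) - ∫ x, f x ∂μ.toJordanDecomposition.negPart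

def IsTransKernel {Ω : Type*} [MeasurableSpace Ω] (k : Ω → SignedMeasure Ω) : Prop :=
  ∀ A : Set Ω, MeasurableSet A → Measurable fun x => k x A

def IsBddKernel {Ω : Type*} [MeasurableSpace Ω] (k : Ω → SignedMeasure Ω) : Prop :=
  IsTransKernel k ∧ ∃ C : ℝ≥0, ∀ x, (k x).totalVariation Set.univ ≤ C

def GivenByKernel {Ω : Type*} [MeasurableSpace Ω]
    (T : SignedMeasure Ω →ₗ[ℝ] SignedMeasure Ω) (k : Ω → SignedMeasure Ω) : Prop :=
  ∀ (μ : SignedMeasure Ω) (A : Set Ω), MeasurableSet A → T μ A = sInt μ (fun x => k x A)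

def IsBdMeasurable {Ω : Type*} [MeasurableSpace Ω] (f : Ω → ℝ) : Prop :=
  Measurable f ∧ ∃ C : ℝ, ∀ x, |f x| ≤ C

instance totalVariation_isFiniteMeasure {Ω : Type*} [MeasurableSpace Ω] (μ : SignedMeasure Ω) :
    IsFiniteMeasure μ.totalVariation := by
  unfold SignedMeasure.totalVariation; infer_instance

section AuxLemmas

variable {Ω : Type*} [MeasurableSpace Ω]

lemma jordan_apply (s : SignedMeasure Ω) {A : Set Ω} (hA : MeasurableSet A) :
    s A = (s.toJordanDecomposition.posPart A).toReal
      - (s.toJordanDecomposition.negPart A).toReal := by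
  conv_lhs => rw [← s.toSignedMeasure_toJordanDecomposition]
  rw [JordanDecomposition.toSignedMeasure, VectorMeasure.sub_apply,
    Measure.toSignedMeasure_apply_measurable hA, Measure.toSignedMeasure_apply_measurable hA]
  rfl

lemma totalVariation_apply (s : SignedMeasure Ω) (A : Set Ω) :
    s.totalVariation A = s.toJordanDecomposition.posPart A
      + s.toJordanDecomposition.negPart A := by
  rw [SignedMeasure.totalVariation, Measure.add_apply]

lemma abs_apply_le (s : SignedMeasure Ω) {A : Set Ω} (hA : MeasurableSet A) :
    |s A| ≤ (s.totalVariation A).toReal := by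
  rw [jordan_apply s hA, totalVariation_apply,
    ENNReal.toReal_add (measure_ne_top _ _) (measure_ne_top _ _)]
  have h1 : (0:ℝ) ≤ (s.toJordanDecomposition.posPart A).toReal := ENNReal.toReal_nonneg
  have h2 : (0:ℝ) ≤ (s.toJordanDecomposition.negPart A).toReal := ENNReal.toReal_nonneg
  rw [abs_sub_le_iff]; constructor <;> linarith

lemma abs_sub_apply (s : SignedMeasure Ω) {D E : Set Ω} (hD : MeasurableSet D)
    (hE : MeasurableSet E) :
    |s D - s E| ≤ (s.totalVariation (symmDiff D E)).toReal := by
  have hDE : s D = s (D ∩ E) + s (D \ E) := by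
    rw [← VectorMeasure.of_union (Set.disjoint_of_subset_left Set.inter_subset_right
      disjoint_sdiff_self_right) (hD.inter hE) (hD.diff hE), Set.inter_union_diff]
  have hED : s E = s (D ∩ E) + s (E \ D) := by
    rw [← VectorMeasure.of_union (Set.disjoint_of_subset_left Set.inter_subset_left
      disjoint_sdiff_self_right) (hD.inter hE) (hE.diff hD), Set.inter_comm, Set.inter_union_diff]
  have hsymm : s.totalVariation (symmDiff D E)
      = s.totalVariation (D \ E) + s.totalVariation (E \ D) := by
    rw [Set.symmDiff_def, measure_union disjoint_sdiff_sdiff (hE.diff hD)]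
  rw [hDE, hED, hsymm, ENNReal.toReal_add (measure_ne_top _ _) (measure_ne_top _ _)]
  have h1 := abs_apply_le s (hD.diff hE)
  have h2 := abs_apply_le s (hE.diff hD)
  have := abs_sub (s (D \ E)) (s (E \ D))
  calc |s (D ∩ E) + s (D \ E) - (s (D ∩ E) + s (E \ D))| = |s (D \ E) - s (E \ D)| := by
        ring_nf
    _ ≤ |s (D \ E)| + |s (E \ D)| := abs_sub _ _
    _ ≤ _ := add_le_add h1 h2

lemma jordan_toSM (ν : Measure Ω) [IsFiniteMeasure ν] :
    ν.toSignedMeasure.toJordanDecomposition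
      = ⟨ν, 0, Measure.MutuallySingular.zero_right⟩ := by
  apply SignedMeasure.toJordanDecomposition_eq
  rw [JordanDecomposition.toSignedMeasure]
  ext A hA
  simp [Measure.toSignedMeasure_apply_measurable hA, VectorMeasure.sub_apply]

lemma sInt_toSM (ν : Measure Ω) [IsFiniteMeasure ν] (f : Ω → ℝ) :
    sInt ν.toSignedMeasure f = ∫ x, f x ∂ν := by
  rw [sInt, jordan_toSM]
  simp

lemma toSM_nonneg (ν : Measure Ω) [IsFiniteMeasure ν] : 0 ≤ ν.toSignedMeasure := by
  rw [VectorMeasure.le_iff]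
  intro A hA
  rw [Measure.toSignedMeasure_apply_measurable hA]
  simp [ENNReal.toReal_nonneg]

lemma exists_measure_of_nonneg {μ : SignedMeasure Ω} (h : 0 ≤ μ) :
    ∃ (ν : Measure Ω) (_ : IsFiniteMeasure ν), ν.toSignedMeasure = μ := by
  have h' : 0 ≤[Set.univ] μ := by
    rwa [VectorMeasure.restrict_univ, VectorMeasure.restrict_univ]
  exact ⟨μ.toMeasureOfZeroLE Set.univ MeasurableSet.univ h', inferInstance,
    SignedMeasure.toMeasureOfZeroLE_toSignedMeasure _ h'⟩

lemma toSM_restrict (ν : Measure Ω) [IsFiniteMeasure ν] {B : Set Ω} (hB : MeasurableSet B) :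
    (ν.restrict B).toSignedMeasure = ν.toSignedMeasure.restrict B := by
  ext A hA
  rw [Measure.toSignedMeasure_apply_measurable hA, VectorMeasure.restrict_apply _ hB hA,
    Measure.toSignedMeasure_apply_measurable (hA.inter hB), Measure.real_def, Measure.real_def, Measure.restrict_apply hA]

lemma vm_mono {w : SignedMeasure Ω} (hw : 0 ≤ w) {D A : Set Ω} (hD : MeasurableSet D)
    (hA : MeasurableSet A) (hDA : D ⊆ A) : w D ≤ w A := by
  rw [← VectorMeasure.of_add_of_diff hD hA hDA]
  have : 0 ≤ w (A \ D) := by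
    rw [VectorMeasure.le_iff] at hw
    simpa using hw _ (hA.diff hD)
  linarith

lemma restrict_nonneg {μ : SignedMeasure Ω} (h : 0 ≤ μ) {B : Set Ω} (hB : MeasurableSet B) :
    0 ≤ μ.restrict B := by
  rw [VectorMeasure.le_iff]
  intro A hA
  rw [VectorMeasure.restrict_apply _ hB hA]
  rw [VectorMeasure.le_iff] at h
  simpa using h _ (hA.inter hB)

section bind

lemma bind_fin {κ : Ω → Measure Ω} (hκ : Measurable κ) {C : ℝ≥0} (hb : ∀ x, κ x Set.univ ≤ C)
    (ν : Measure Ω) [IsFiniteMeasure ν] : IsFiniteMeasure (ν.bind κ) := by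
  constructor
  rw [Measure.bind_apply MeasurableSet.univ hκ.aemeasurable]
  calc ∫⁻ a, κ a Set.univ ∂ν ≤ ∫⁻ _, (C : ℝ≥0∞) ∂ν := lintegral_mono fun a => hb a
    _ = C * ν Set.univ := by rw [lintegral_const]
    _ < ⊤ := ENNReal.mul_lt_top ENNReal.coe_lt_top (measure_lt_top _ _)

lemma bind_add {κ : Ω → Measure Ω} (hκ : Measurable κ) (a b : Measure Ω) :
    (a + b).bind κ = a.bind κ + b.bind κ := by
  ext A hA
  rw [Measure.add_apply, Measure.bind_apply hA hκ.aemeasurable,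
    Measure.bind_apply hA hκ.aemeasurable, Measure.bind_apply hA hκ.aemeasurable,
    lintegral_add_measure]

lemma bind_smul {κ : Ω → Measure Ω} (hκ : Measurable κ) (c : ℝ≥0) (a : Measure Ω) :
    (c • a).bind κ = c • a.bind κ := by
  ext A hA
  rw [Measure.smul_apply, Measure.bind_apply hA hκ.aemeasurable,
    Measure.bind_apply hA hκ.aemeasurable, ← smul_one_smul ℝ≥0∞ c a,
    ← smul_one_smul ℝ≥0∞ c (∫⁻ x, κ x A ∂a), lintegral_smul_measure, smul_eq_mul]

lemma bind_apply_toReal {κ : Ω → Measure Ω} (hκ : Measurable κ) {C : ℝ≥0}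
    (hb : ∀ x, κ x Set.univ ≤ C) (ν : Measure Ω) [IsFiniteMeasure ν] {A : Set Ω}
    (hA : MeasurableSet A) (hmeas : Measurable fun x => (κ x A).toReal) :
    ((ν.bind κ) A).toReal = ∫ x, (κ x A).toReal ∂ν := by
  rw [Measure.bind_apply hA hκ.aemeasurable]
  rw [integral_eq_lintegral_of_nonneg_ae (ae_of_all _ fun x => ENNReal.toReal_nonneg)
    hmeas.aestronglyMeasurable]
  congr 1
  refine lintegral_congr fun x => ?_
  rw [ENNReal.ofReal_toReal]
  exact ne_top_of_le_ne_top ENNReal.coe_ne_top (le_trans (measure_mono (Set.subset_univ A)) (hb x))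

end bind

lemma jordan_add_eq (μ ν : SignedMeasure Ω) :
    (μ + ν).toJordanDecomposition.posPart
      + (μ.toJordanDecomposition.negPart + ν.toJordanDecomposition.negPart)
    = (μ + ν).toJordanDecomposition.negPart
      + (μ.toJordanDecomposition.posPart + ν.toJordanDecomposition.posPart) := by
  ext A hA
  have h1 := jordan_apply μ hA
  have h2 := jordan_apply ν hA
  have h3 := jordan_apply (μ + ν) hA
  rw [VectorMeasure.add_apply] at h3
  simp only [Measure.add_apply]
  rw [← ENNReal.toReal_eq_toReal_iff' (by exact ENNReal.add_ne_top.2 ⟨measure_ne_top _ _,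
      ENNReal.add_ne_top.2 ⟨measure_ne_top _ _, measure_ne_top _ _⟩⟩)
    (by exact ENNReal.add_ne_top.2 ⟨measure_ne_top _ _,
      ENNReal.add_ne_top.2 ⟨measure_ne_top _ _, measure_ne_top _ _⟩⟩)]
  rw [ENNReal.toReal_add (measure_ne_top _ _) (ENNReal.add_ne_top.2 ⟨measure_ne_top _ _,
      measure_ne_top _ _⟩),
    ENNReal.toReal_add (measure_ne_top _ _) (ENNReal.add_ne_top.2 ⟨measure_ne_top _ _,
      measure_ne_top _ _⟩),
    ENNReal.toReal_add (measure_ne_top _ _) (measure_ne_top _ _),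
    ENNReal.toReal_add (measure_ne_top _ _) (measure_ne_top _ _)]
  linarith

lemma sup'_range_succ (f : ℕ → ℝ) (n : ℕ) :
    ((Finset.range (n+1+1)).sup' Finset.nonempty_range_add_one f)
      = max (f (n+1)) ((Finset.range (n+1)).sup' Finset.nonempty_range_add_one f) := by
  apply le_antisymm
  · refine Finset.sup'_le _ _ fun i hi => ?_
    have hi' : i ≤ n + 1 := Finset.mem_range_succ_iff.1 hi
    rcases eq_or_lt_of_le hi' with rfl | hlt
    · exact le_max_left _ _
    · exact le_trans (Finset.le_sup' f (Finset.mem_range.2 hlt)) (le_max_right _ _)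
  · refine max_le (Finset.le_sup' f (Finset.self_mem_range_succ (n+1)))
      (Finset.sup'_le _ _ fun i hi => Finset.le_sup' f ?_)
    exact Finset.mem_range.2 (by have := Finset.mem_range.1 hi; omega)

end AuxLemmas

theorem stmt12 {Ω : Type*} [TopologicalSpace Ω] [PolishSpace Ω] [MeasurableSpace Ω] [BorelSpace Ω]
    (T : SignedMeasure Ω →ₗ[ℝ] SignedMeasure Ω) (k : Ω → SignedMeasure Ω)
    (hk : IsBddKernel k) (hT : GivenByKernel T k) :
    ∃ S : SignedMeasure Ω →ₗ[ℝ] SignedMeasure Ω,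
      GivenByKernel S (fun x => ((k x).toJordanDecomposition.posPart).toSignedMeasure) ∧
      (∀ μ : SignedMeasure Ω, 0 ≤ μ → 0 ≤ S μ ∧ T μ ≤ S μ) ∧
      ∀ R : SignedMeasure Ω →ₗ[ℝ] SignedMeasure Ω,
        (∀ μ : SignedMeasure Ω, 0 ≤ μ → 0 ≤ R μ ∧ T μ ≤ R μ) →
        ∀ μ : SignedMeasure Ω, 0 ≤ μ → S μ ≤ R μ := by
  classical
  obtain ⟨htk, C, hC⟩ := hk
  -- a countable generating algebra
  set 𝒜 : Set (Set Ω) := generateSetAlgebra (MeasurableSpace.countableGeneratingSet Ω)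
    with h𝒜def
  have h𝒜alg : IsSetAlgebra 𝒜 := isSetAlgebra_generateSetAlgebra
  have h𝒜count : 𝒜.Countable :=
    countable_generateSetAlgebra (MeasurableSpace.countable_countableGeneratingSet)
  have h𝒜gen : ‹MeasurableSpace Ω› = MeasurableSpace.generateFrom 𝒜 := by
    rw [h𝒜def, generateFrom_generateSetAlgebra_eq,
      MeasurableSpace.generateFrom_countableGeneratingSet]
  have h𝒜meas : ∀ t ∈ 𝒜, MeasurableSet t := fun t ht => by
    rw [h𝒜gen]; exact MeasurableSpace.measurableSet_generateFrom ht
  obtain ⟨e, he⟩ : ∃ e : ℕ → Set Ω, 𝒜 = Set.range e :=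
    Set.Countable.exists_eq_range h𝒜count ⟨∅, h𝒜alg.empty_mem⟩
  have hemeas : ∀ i, MeasurableSet (e i) := fun i => h𝒜meas _ (he ▸ Set.mem_range_self i)
  -- the approximating sequence
  set v : SignedMeasure Ω → Set Ω → ℕ → ℝ := fun s A n =>
    (Finset.range (n+1)).sup' Finset.nonempty_range_add_one fun i => s (A ∩ e i) with hvdef
  -- the key convergence lemma
  have key : ∀ (s : SignedMeasure Ω) {A : Set Ω}, MeasurableSet A →
      Tendsto (fun n => v s A n) atTop
        (𝓝 ((s.toJordanDecomposition.posPart A).toReal)) := by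
    intro s A hA
    set p := (s.toJordanDecomposition.posPart A).toReal with hp
    have hub : ∀ n, v s A n ≤ p := by
      intro n
      refine Finset.sup'_le _ _ fun i _ => ?_
      have h1 := jordan_apply s (hA.inter (hemeas i))
      have h2 : (s.toJordanDecomposition.posPart (A ∩ e i)).toReal ≤ p :=
        ENNReal.toReal_mono (measure_ne_top _ _) (measure_mono Set.inter_subset_left)
      have h3 : (0:ℝ) ≤ (s.toJordanDecomposition.negPart (A ∩ e i)).toReal :=
        ENNReal.toReal_nonneg
      linarith
    have hmono : Monotone (fun n => v s A n) := by
      intro m n hmn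
      exact Finset.sup'_mono _ (Finset.range_subset_range.2 (by omega)) Finset.nonempty_range_add_one
    have happrox : ∀ ε : ℝ, 0 < ε → ∃ n, p - ε < v s A n := by
      intro ε hε
      obtain ⟨i, hi₁, hi₂, hi₃, hpos, hneg⟩ := s.toJordanDecomposition_spec
      have hpA : p = s (i ∩ A) := by
        rw [hp, hpos, SignedMeasure.toMeasureOfZeroLE_apply _ hi₂ hi₁ hA]
        simp
      have hdense : (s.totalVariation).MeasureDense 𝒜 :=
        Measure.MeasureDense.of_generateFrom_isSetAlgebra_finite (μ := s.totalVariation) h𝒜alg h𝒜gen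
      obtain ⟨t, ht𝒜, htε⟩ := hdense.approx i hi₁ (measure_ne_top _ _) ε hε
      obtain ⟨m, rfl⟩ : ∃ m, e m = t := by
        have : t ∈ Set.range e := he ▸ ht𝒜
        exact this.imp fun _ h => h
      refine ⟨m, ?_⟩
      have hle : s (A ∩ e m) ≤ v s A m :=
        Finset.le_sup' (f := fun i => s (A ∩ e i)) (Finset.self_mem_range_succ m)
      have hsub : (symmDiff (A ∩ e m) (A ∩ i)) ⊆ symmDiff i (e m) := by
        intro x hx
        simp only [Set.mem_symmDiff, Set.mem_inter_iff] at hx ⊢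
        tauto
      have habs : |s (A ∩ e m) - s (A ∩ i)|
          ≤ (s.totalVariation (symmDiff i (e m))).toReal := by
        refine le_trans (abs_sub_apply s (hA.inter (hemeas m)) (hA.inter hi₁)) ?_
        exact ENNReal.toReal_mono (measure_ne_top _ _) (measure_mono hsub)
      have hlt : (s.totalVariation (symmDiff i (e m))).toReal < ε := by
        have := (ENNReal.toReal_lt_toReal (measure_ne_top _ _) ENNReal.ofReal_ne_top).2 htε
        rwa [ENNReal.toReal_ofReal hε.le] at this
      have : p - ε < s (A ∩ e m) := by
        rw [hpA, Set.inter_comm i A] at *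
        have := abs_sub_lt_iff.1 (lt_of_le_of_lt habs hlt)
        linarith [this.2]
      linarith
    rw [Metric.tendsto_atTop]
    intro ε hε
    obtain ⟨N, hN⟩ := happrox ε hε
    refine ⟨N, fun n hn => ?_⟩
    have h1 := hub n
    have h3 := hmono hn
    rw [Real.dist_eq, abs_sub_lt_iff]
    constructor <;> linarith
  -- measurability of the approximants
  have hvmeas : ∀ {A : Set Ω}, MeasurableSet A → ∀ n, Measurable fun x => v (k x) A n := by
    intro A hA n
    induction n with
    | zero =>
      have : (fun x => v (k x) A 0) = fun x => k x (A ∩ e 0) := by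
        funext x
        rw [hvdef]
        simp
      rw [this]
      exact htk _ (hA.inter (hemeas 0))
    | succ n ih =>
      have hstep : (fun x => v (k x) A (n+1))
          = fun x => max (k x (A ∩ e (n+1))) (v (k x) A n) := by
        funext x
        rw [hvdef]
        exact sup'_range_succ _ n
      rw [hstep]
      exact (htk _ (hA.inter (hemeas (n+1)))).max ih
  -- bounds
  have htvC : ∀ x {D : Set Ω}, ((k x).totalVariation D).toReal ≤ (C:ℝ) := by
    intro x D
    calc ((k x).totalVariation D).toReal ≤ ((k x).totalVariation Set.univ).toReal :=
          ENNReal.toReal_mono (measure_ne_top _ _) (measure_mono (Set.subset_univ D))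
      _ ≤ ((C:ℝ≥0∞)).toReal := ENNReal.toReal_mono ENNReal.coe_ne_top (hC x)
      _ = (C:ℝ) := by simp
  have hkabs : ∀ x {D : Set Ω}, MeasurableSet D → |k x D| ≤ (C:ℝ) :=
    fun x D hD => le_trans (abs_apply_le (k x) hD) (htvC x)
  have hvbd : ∀ {A : Set Ω}, MeasurableSet A → ∀ n x, |v (k x) A n| ≤ (C:ℝ) := by
    intro A hA n x
    rw [abs_le]
    constructor
    · refine le_trans ?_ (Finset.le_sup' (f := fun i => k x (A ∩ e i))
        (Finset.mem_range.2 (Nat.succ_pos n)))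
      have := hkabs x (hA.inter (hemeas 0))
      rw [abs_le] at this
      exact this.1
    · refine Finset.sup'_le _ _ fun i _ => ?_
      have := hkabs x (hA.inter (hemeas i))
      rw [abs_le] at this
      exact this.2
  -- the positive-part kernel
  set κ : Ω → Measure Ω := fun x => (k x).toJordanDecomposition.posPart with hκdef
  have hmeasA : ∀ {A : Set Ω}, MeasurableSet A → Measurable fun x => ((κ x) A).toReal := by
    intro A hA
    exact measurable_of_tendsto_metrizable (fun n => hvmeas hA n)
      (tendsto_pi_nhds.2 fun x => key (k x) hA)
  have hκ : Measurable κ := by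
    refine Measure.measurable_of_measurable_coe _ fun A hA => ?_
    have : (fun x => (κ x) A) = fun x => ENNReal.ofReal (((κ x) A).toReal) := by
      funext x
      rw [ENNReal.ofReal_toReal (measure_ne_top _ _)]
    rw [this]
    exact ENNReal.measurable_ofReal.comp (hmeasA hA)
  have hκb : ∀ x, κ x Set.univ ≤ (C : ℝ≥0∞) := by
    intro x
    refine le_trans ?_ (hC x)
    rw [totalVariation_apply]
    exact self_le_add_right _ _
  have hκbd : ∀ x (A : Set Ω), ((κ x) A).toReal ≤ (C:ℝ) := by
    intro x A
    refine le_trans ?_ (htvC x (D := A))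
    refine ENNReal.toReal_mono (measure_ne_top _ _) ?_
    rw [totalVariation_apply]
    exact self_le_add_right _ _
  -- integrability helper
  have hint : ∀ (f : Ω → ℝ) (ν : Measure Ω), IsFiniteMeasure ν → Measurable f →
      (∀ x, |f x| ≤ (C:ℝ)) → Integrable f ν := by
    intro f ν hν hm hb
    haveI := hν
    exact Integrable.mono' (integrable_const (C:ℝ)) hm.aestronglyMeasurable
      (ae_of_all _ fun x => by simpa [Real.norm_eq_abs] using hb x)
  -- the operator
  have hfin : ∀ (ν : Measure Ω), IsFiniteMeasure ν → IsFiniteMeasure (ν.bind κ) :=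
    fun ν hν => by haveI := hν; exact bind_fin hκ hκb ν
  let G : Measure Ω → SignedMeasure Ω := fun ν =>
    if h : IsFiniteMeasure (ν.bind κ) then @Measure.toSignedMeasure _ _ _ h else 0
  have hG : ∀ (ν : Measure Ω) (hν : IsFiniteMeasure ν),
      G ν = @Measure.toSignedMeasure _ _ (ν.bind κ) (hfin ν hν) :=
    fun ν hν => dif_pos (hfin ν hν)
  have hGapply : ∀ (ν : Measure Ω) (hν : IsFiniteMeasure ν) {A : Set Ω}, MeasurableSet A →
      G ν A = ∫ x, ((κ x) A).toReal ∂ν := by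
    intro ν hν A hA
    haveI := hν
    haveI := hfin ν hν
    rw [hG ν hν, Measure.toSignedMeasure_apply_measurable hA,
      Measure.real_def, bind_apply_toReal hκ hκb ν hA (hmeasA hA)]
  have hGadd : ∀ (a b : Measure Ω), IsFiniteMeasure a → IsFiniteMeasure b →
      G (a + b) = G a + G b := by
    intro a b ha hb
    haveI := ha; haveI := hb
    haveI := hfin a ha; haveI := hfin b hb
    rw [hG a ha, hG b hb, hG (a+b) inferInstance]
    have : (a + b).bind κ = a.bind κ + b.bind κ := bind_add hκ a b
    simp_rw [this]
    exact Measure.toSignedMeasure_add _ _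
  have hGsmul : ∀ (c : ℝ≥0) (a : Measure Ω), IsFiniteMeasure a →
      G (c • a) = c • G a := by
    intro c a ha
    haveI := ha
    haveI := hfin a ha
    rw [hG a ha, hG (c • a) inferInstance]
    have : (c • a).bind κ = c • a.bind κ := bind_smul hκ c a
    simp_rw [this]
    exact Measure.toSignedMeasure_smul _ _
  let F : SignedMeasure Ω → SignedMeasure Ω := fun μ =>
    G μ.toJordanDecomposition.posPart - G μ.toJordanDecomposition.negPart
  have hSapply : ∀ (μ : SignedMeasure Ω) {A : Set Ω}, MeasurableSet A →
      F μ A = (∫ x, ((κ x) A).toReal ∂μ.toJordanDecomposition.posPart)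
        - ∫ x, ((κ x) A).toReal ∂μ.toJordanDecomposition.negPart := by
    intro μ A hA
    show (G _ - G _) A = _
    rw [VectorMeasure.sub_apply, hGapply _ inferInstance hA, hGapply _ inferInstance hA]
  have hFadd : ∀ μ ν : SignedMeasure Ω, F (μ + ν) = F μ + F ν := by
    intro μ ν
    show G _ - G _ = (G _ - G _) + (G _ - G _)
    have h1 : G ((μ+ν).toJordanDecomposition.posPart)
          + G (μ.toJordanDecomposition.negPart + ν.toJordanDecomposition.negPart)
        = G ((μ+ν).toJordanDecomposition.negPart)
          + G (μ.toJordanDecomposition.posPart + ν.toJordanDecomposition.posPart) := by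
      rw [← hGadd _ _ inferInstance inferInstance, ← hGadd _ _ inferInstance inferInstance,
        jordan_add_eq μ ν]
    rw [hGadd _ _ inferInstance inferInstance, hGadd _ _ inferInstance inferInstance] at h1
    rw [sub_add_sub_comm, sub_eq_sub_iff_add_eq_add, h1]
    exact add_comm _ _
  have hFsmul : ∀ (c : ℝ) (μ : SignedMeasure Ω), F (c • μ) = c • F μ := by
    intro c μ
    show G _ - G _ = c • (G _ - G _)
    rcases le_or_gt 0 c with hc | hc
    · rw [show (c • μ).toJordanDecomposition.posPart
          = c.toNNReal • μ.toJordanDecomposition.posPart by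
            rw [SignedMeasure.toJordanDecomposition_smul_real,
              JordanDecomposition.real_smul_posPart_nonneg _ _ hc],
        show (c • μ).toJordanDecomposition.negPart
          = c.toNNReal • μ.toJordanDecomposition.negPart by
            rw [SignedMeasure.toJordanDecomposition_smul_real,
              JordanDecomposition.real_smul_negPart_nonneg _ _ hc],
        hGsmul _ _ inferInstance, hGsmul _ _ inferInstance]
      ext A hA
      simp only [VectorMeasure.sub_apply, VectorMeasure.smul_apply, NNReal.smul_def,
        smul_eq_mul, Real.coe_toNNReal c hc]
      ring
    · rw [show (c • μ).toJordanDecomposition.posPart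
          = (-c).toNNReal • μ.toJordanDecomposition.negPart by
            rw [SignedMeasure.toJordanDecomposition_smul_real,
              JordanDecomposition.real_smul_posPart_neg _ _ hc],
        show (c • μ).toJordanDecomposition.negPart
          = (-c).toNNReal • μ.toJordanDecomposition.posPart by
            rw [SignedMeasure.toJordanDecomposition_smul_real,
              JordanDecomposition.real_smul_negPart_neg _ _ hc],
        hGsmul _ _ inferInstance, hGsmul _ _ inferInstance]
      ext A hA
      simp only [VectorMeasure.sub_apply, VectorMeasure.smul_apply, NNReal.smul_def,
        smul_eq_mul, Real.coe_toNNReal (-c) (by linarith)]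
      ring
  refine ⟨{ toFun := F, map_add' := hFadd, map_smul' := hFsmul }, ?_, ?_, ?_⟩
  · -- GivenByKernel
    intro μ A hA
    show F μ A = _
    rw [hSapply μ hA, sInt]
    congr 1 <;>
    · refine integral_congr_ae (ae_of_all _ fun x => ?_)
      exact (Measure.toSignedMeasure_apply_measurable hA).symm
  · -- positivity and domination
    intro μ hμ
    obtain ⟨ν, hνfin, rfl⟩ := exists_measure_of_nonneg hμ
    haveI := hνfin
    have hJ := jordan_toSM ν
    have hJp : ν.toSignedMeasure.toJordanDecomposition.posPart = ν := by rw [hJ]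
    have hJn : ν.toSignedMeasure.toJordanDecomposition.negPart = 0 := by rw [hJ]
    constructor
    · rw [VectorMeasure.le_iff]
      intro A hA
      show (0:ℝ) ≤ F ν.toSignedMeasure A
      rw [hSapply _ hA, hJp, hJn, integral_zero_measure, sub_zero]
      exact integral_nonneg fun x => ENNReal.toReal_nonneg
    · rw [VectorMeasure.le_iff]
      intro A hA
      show T ν.toSignedMeasure A ≤ F ν.toSignedMeasure A
      rw [hT _ _ hA, sInt_toSM, hSapply _ hA, hJp, hJn, integral_zero_measure, sub_zero]
      refine integral_mono (hint _ _ inferInstance (htk _ hA) fun x => hkabs x hA)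
        (hint _ _ inferInstance (hmeasA hA) fun x => ?_) fun x => ?_
      · rw [abs_of_nonneg ENNReal.toReal_nonneg]
        exact hκbd x A
      · have := jordan_apply (k x) hA
        have h0 : (0:ℝ) ≤ ((k x).toJordanDecomposition.negPart A).toReal :=
          ENNReal.toReal_nonneg
        show k x A ≤ ((κ x) A).toReal
        rw [hκdef]
        linarith
  · -- minimality
    intro R hR μ hμ
    obtain ⟨ν, hνfin, rfl⟩ := exists_measure_of_nonneg hμ
    haveI := hνfin
    have hJ := jordan_toSM ν
    have hJp : ν.toSignedMeasure.toJordanDecomposition.posPart = ν := by rw [hJ]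
    have hJn : ν.toSignedMeasure.toJordanDecomposition.negPart = 0 := by rw [hJ]
    rw [VectorMeasure.le_iff]
    intro A hA
    show F ν.toSignedMeasure A ≤ R ν.toSignedMeasure A
    rw [hSapply _ hA, hJp, hJn, integral_zero_measure, sub_zero]
    -- the inductive bound
    have main : ∀ (n : ℕ) (ν' : Measure Ω) (hf : IsFiniteMeasure ν'),
        (∫ x, v (k x) A n ∂ν') ≤ R (@Measure.toSignedMeasure _ _ ν' hf) A := by
      intro n
      induction n with
      | zero =>
        intro ν' hf
        haveI := hf
        have hv0 : (fun x => v (k x) A 0) = fun x => k x (A ∩ e 0) := by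
          funext x
          rw [hvdef]
          simp
        rw [hv0]
        have h1 : (∫ x, k x (A ∩ e 0) ∂ν') = T ν'.toSignedMeasure (A ∩ e 0) := by
          rw [hT _ _ (hA.inter (hemeas 0)), sInt_toSM]
        rw [h1]
        have h2 : T ν'.toSignedMeasure (A ∩ e 0) ≤ R ν'.toSignedMeasure (A ∩ e 0) :=
          VectorMeasure.le_iff.1 (hR _ (toSM_nonneg ν')).2 _ (hA.inter (hemeas 0))
        refine le_trans h2 (vm_mono (hR _ (toSM_nonneg ν')).1 (hA.inter (hemeas 0)) hA
          Set.inter_subset_left)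
      | succ n ih =>
        intro ν' hf
        haveI := hf
        have hg : Measurable fun x => k x (A ∩ e (n+1)) := htk _ (hA.inter (hemeas (n+1)))
        set B : Set Ω := {x | k x (A ∩ e (n+1)) ≤ v (k x) A n} with hBdef
        have hB : MeasurableSet B := measurableSet_le hg (hvmeas hA n)
        have hvsucc : ∀ x, v (k x) A (n+1) = max (k x (A ∩ e (n+1))) (v (k x) A n) := by
          intro x
          rw [hvdef]
          exact sup'_range_succ _ n
        have hsplit : (∫ x, v (k x) A (n+1) ∂ν')
            = (∫ x in B, v (k x) A (n+1) ∂ν') + ∫ x in Bᶜ, v (k x) A (n+1) ∂ν' :=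
          (integral_add_compl hB (hint _ ν' inferInstance (hvmeas hA (n+1))
            (hvbd hA (n+1)))).symm
        have h1 : (∫ x in B, v (k x) A (n+1) ∂ν') = ∫ x in B, v (k x) A n ∂ν' := by
          refine setIntegral_congr_fun hB fun x hx => ?_
          rw [hvsucc x]
          exact max_eq_right hx
        have h2 : (∫ x in Bᶜ, v (k x) A (n+1) ∂ν') = ∫ x in Bᶜ, k x (A ∩ e (n+1)) ∂ν' := by
          refine setIntegral_congr_fun hB.compl fun x hx => ?_
          rw [hvsucc x]
          exact max_eq_left (le_of_lt (not_le.1 hx))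
        have h3 : (∫ x in B, v (k x) A n ∂ν')
            ≤ R ((ν'.restrict B).toSignedMeasure) A := ih (ν'.restrict B) inferInstance
        have h4 : (∫ x in Bᶜ, k x (A ∩ e (n+1)) ∂ν')
            ≤ R ((ν'.restrict Bᶜ).toSignedMeasure) A := by
          have heq : (∫ x in Bᶜ, k x (A ∩ e (n+1)) ∂ν')
              = T ((ν'.restrict Bᶜ).toSignedMeasure) (A ∩ e (n+1)) := by
            rw [hT _ _ (hA.inter (hemeas (n+1))), sInt_toSM]
          rw [heq]
          refine le_trans (VectorMeasure.le_iff.1 (hR _ (toSM_nonneg _)).2 _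
            (hA.inter (hemeas (n+1)))) ?_
          exact vm_mono (hR _ (toSM_nonneg _)).1 (hA.inter (hemeas (n+1))) hA
            Set.inter_subset_left
        have h5' : (ν'.restrict B).toSignedMeasure + (ν'.restrict Bᶜ).toSignedMeasure
            = ν'.toSignedMeasure := by
          ext D hD
          rw [VectorMeasure.add_apply, Measure.toSignedMeasure_apply_measurable hD,
            Measure.toSignedMeasure_apply_measurable hD,
            Measure.toSignedMeasure_apply_measurable hD,
            Measure.real_def, Measure.real_def, Measure.real_def,
            ← ENNReal.toReal_add (measure_ne_top _ _) (measure_ne_top _ _),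
            ← Measure.add_apply, Measure.restrict_add_restrict_compl hB]
        have h5 : R ((ν'.restrict B).toSignedMeasure) A
            + R ((ν'.restrict Bᶜ).toSignedMeasure) A = R ν'.toSignedMeasure A := by
          rw [← VectorMeasure.add_apply, ← map_add, h5']
        linarith
    have hlim : Tendsto (fun n => ∫ x, v (k x) A n ∂ν) atTop
        (𝓝 (∫ x, ((κ x) A).toReal ∂ν)) := by
      refine tendsto_integral_of_dominated_convergence (fun _ => (C:ℝ))
        (fun n => (hvmeas hA n).aestronglyMeasurable) (integrable_const _)
        (fun n => ae_of_all _ fun x => ?_) (ae_of_all _ fun x => ?_)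
      · simpa [Real.norm_eq_abs] using hvbd hA n x
      · exact key (k x) hA
    exact le_of_tendsto hlim (Eventually.of_forall fun n => main n ν inferInstance)
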